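/- If G is a finite group with a cyclic normal subgroup K such that G/K is isomorphic to A5, then the derived subgroup G' is a perfect central extension of A5; in particular G' is quasisimple. -/

import Mathlib

open scoped commutatorElement

lemma A5_noncomm : ∃ a b : alternatingGroup (Fin 5), a * b ≠ b * a := by
  refine ⟨⟨Equiv.swap 0 1 * Equiv.swap 0 2, by rw [Equiv.Perm.mem_alternatingGroup]; decide⟩,
    ⟨Equiv.swap 0 1 * Equiv.swap 0 3, by rw [Equiv.Perm.mem_alternatingGroup]; decide⟩, ?_⟩
  intro hcon
  have h2 : (Equiv.swap 0 1 * Equiv.swap 0 2) * (Equiv.swap 0 1 * Equiv.swap 0 3)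
      = (Equiv.swap 0 1 * Equiv.swap 0 3) * (Equiv.swap (0:Fin 5) 1 * Equiv.swap 0 2) :=
    Subtype.ext_iff.mp hcon
  revert h2
  decide

lemma A5_center_eq_bot : Subgroup.center (alternatingGroup (Fin 5)) = ⊥ := by
  obtain ⟨a, b, hab⟩ := A5_noncomm
  rcases (Subgroup.center (alternatingGroup (Fin 5))).normal_of_characteristic.eq_bot_or_eq_top
    with h | h
  · exact h
  · exact absurd (Subgroup.mem_center_iff.mp (h ▸ Subgroup.mem_top a) b).symm hab

lemma A5_commutator_eq_top : commutator (alternatingGroup (Fin 5)) = ⊤ := by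
  obtain ⟨a, b, hab⟩ := A5_noncomm
  rcases (Subgroup.commutator_normal (⊤ : Subgroup (alternatingGroup (Fin 5))) ⊤).eq_bot_or_eq_top with h | h
  · exfalso
    have : ⁅b, a⁆ ∈ commutator (alternatingGroup (Fin 5)) :=
      Subgroup.commutator_mem_commutator (Subgroup.mem_top b) (Subgroup.mem_top a)
    rw [commutator_def, h, Subgroup.mem_bot, commutatorElement_eq_one_iff_mul_comm] at this
    exact hab this.symm
  · exact h

lemma cyclic_hom_pow {α : Type*} [Group α] [IsCyclic α] (σ : α →* α) :
    ∃ a : ℤ, ∀ x, σ x = x ^ a := by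
  obtain ⟨g, hg⟩ := IsCyclic.exists_generator (α := α)
  obtain ⟨a, ha⟩ := (Subgroup.mem_zpowers_iff).mp (hg (σ g))
  refine ⟨a, fun x => ?_⟩
  obtain ⟨n, hn⟩ := (Subgroup.mem_zpowers_iff).mp (hg x)
  rw [← hn, map_zpow, ← ha, ← zpow_mul, ← zpow_mul, mul_comm]

lemma mulAut_comm {α : Type*} [Group α] (hc : IsCyclic α) (σ τ : MulAut α) : σ * τ = τ * σ := by
  obtain ⟨a, ha⟩ := cyclic_hom_pow σ.toMonoidHom
  obtain ⟨b, hb⟩ := cyclic_hom_pow τ.toMonoidHom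
  simp only [MulEquiv.coe_toMonoidHom] at ha hb
  ext x
  show σ (τ x) = τ (σ x)
  rw [ha, hb, ha, hb, ← zpow_mul, ← zpow_mul, mul_comm]

lemma commutator_central {G : Type*} [Group G] {z w : G}
    (hz : ∀ g, z * g = g * z) (hw : ∀ g, w * g = g * w) (c d : G) :
    ⁅c * z, d * w⁆ = ⁅c, d⁆ := by
  have key : ∀ (x g : G), (∀ y, x * y = y * x) → x * g * x⁻¹ = g := by
    intro x g hx
    rw [hx g, mul_inv_cancel_right]
  calc ⁅c * z, d * w⁆ = (c * z) * (d * w) * (c * z)⁻¹ * (d * w)⁻¹ := commutatorElement_def _ _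
    _ = c * (z * (d * w) * z⁻¹) * c⁻¹ * (d * w)⁻¹ := by
        rw [mul_inv_rev]; group
    _ = c * (d * w) * c⁻¹ * (w⁻¹ * d⁻¹) := by rw [key z (d*w) hz, mul_inv_rev]
    _ = c * d * (w * c⁻¹ * w⁻¹) * d⁻¹ := by group
    _ = c * d * c⁻¹ * d⁻¹ := by rw [key w c⁻¹ hw]
    _ = ⁅c, d⁆ := (commutatorElement_def _ _).symm

theorem derived_subgroup_quasisimple (G : Type*) [Group G] [Finite G]
    (K : Subgroup G) [K.Normal] (hK : IsCyclic K)
    (h : Nonempty ((G ⧸ K) ≃* alternatingGroup (Fin 5))) :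
    (⁅(⊤ : Subgroup (commutator G)), (⊤ : Subgroup (commutator G))⁆ = ⊤) ∧
    Nonempty ((commutator G ⧸ Subgroup.center (commutator G)) ≃*
      alternatingGroup (Fin 5)) := by
  obtain ⟨e⟩ := h
  -- commutator of G/K is ⊤
  have hQtop : commutator (G ⧸ K) = ⊤ := by
    have h1 : Subgroup.map e.toMonoidHom (commutator (G ⧸ K)) = ⊤ := by
      rw [commutator_def, Subgroup.map_commutator,
        Subgroup.map_top_of_surjective _ e.surjective, ← commutator_def,
        A5_commutator_eq_top]
    have h2 : Subgroup.map e.toMonoidHom ⊤ = ⊤ :=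
      Subgroup.map_top_of_surjective _ e.surjective
    exact Subgroup.map_injective e.injective (h1.trans h2.symm)
  -- the image of commutator G in G/K is everything
  have hmap : Subgroup.map (QuotientGroup.mk' K) (commutator G) = ⊤ := by
    rw [commutator_def, Subgroup.map_commutator,
      Subgroup.map_top_of_surjective _ (QuotientGroup.mk'_surjective K), ← commutator_def,
      hQtop]
  -- decomposition G = (commutator G) * K
  have hdecomp : ∀ g : G, ∃ c ∈ commutator G, ∃ z ∈ K, g = c * z := by
    intro g
    have : (QuotientGroup.mk' K) g ∈ Subgroup.map (QuotientGroup.mk' K) (commutator G) := by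
      rw [hmap]; exact Subgroup.mem_top _
    obtain ⟨c, hc, hceq⟩ := this
    refine ⟨c, hc, c⁻¹ * g, ?_, by group⟩
    have : (QuotientGroup.mk' K) (c⁻¹ * g) = 1 := by
      rw [map_mul, map_inv, hceq, inv_mul_cancel]
    rwa [← MonoidHom.mem_ker, QuotientGroup.ker_mk'] at this
  -- commutator G centralizes K
  haveI : IsCyclic ↥K := hK
  have hcent : ∀ g ∈ commutator G, ∀ k ∈ K, g * k = k * g := by
    letI : CommGroup (MulAut ↥K) :=
      { (inferInstance : Group (MulAut ↥K)) with mul_comm := mulAut_comm hK }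
    have hker := Abelianization.commutator_subset_ker (MulAut.conjNormal (H := K))
    intro g hg k hk
    have h1 : MulAut.conjNormal (H := K) g = 1 := MonoidHom.mem_ker.mp (hker hg)
    have h2 : ((MulAut.conjNormal (H := K) g ⟨k, hk⟩ : K) : G) = k := by rw [h1]; rfl
    rw [MulAut.conjNormal_apply] at h2
    have h3 : g * k * g⁻¹ = k := h2
    have h4 := congrArg (fun x => x * g) h3
    rwa [inv_mul_cancel_right] at h4
  -- K is central in G
  have hKcentral : ∀ k ∈ K, ∀ g : G, k * g = g * k := by
    have hKcomm : ∀ x y : ↥K, x * y = y * x := fun x y =>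
      letI : CommGroup ↥K := IsCyclic.commGroup
      mul_comm x y
    intro k hk g
    obtain ⟨c, hc, z, hz, rfl⟩ := hdecomp g
    have h1 : k * z = z * k := congrArg Subtype.val (hKcomm ⟨k, hk⟩ ⟨z, hz⟩)
    have h2 := hcent c hc k hk
    calc k * (c * z) = (k * c) * z := by rw [mul_assoc]
      _ = (c * k) * z := by rw [← h2]
      _ = c * (k * z) := by rw [mul_assoc]
      _ = c * (z * k) := by rw [h1]
      _ = (c * z) * k := by rw [mul_assoc]
  -- the commutator subgroup is perfect (as a subgroup of G)
  have hperf : ⁅commutator G, commutator G⁆ = commutator G := by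
    apply le_antisymm
    · rw [commutator_def]
      exact Subgroup.commutator_mono le_top le_top
    · show (⁅(⊤ : Subgroup G), ⊤⁆ : Subgroup G) ≤ ⁅commutator G, commutator G⁆
      rw [Subgroup.commutator_le]
      intro g _ h' _
      obtain ⟨c, hc, z, hz, rfl⟩ := hdecomp g
      obtain ⟨d, hd, w, hw, rfl⟩ := hdecomp h'
      rw [commutator_central (hKcentral z hz) (hKcentral w hw)]
      exact Subgroup.commutator_mem_commutator hc hd
  constructor
  · -- perfectness inside the subgroup
    apply Subgroup.map_injective (commutator G).subtype_injective
    rw [Subgroup.map_commutator, ← MonoidHom.range_eq_map, Subgroup.range_subtype]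
    exact hperf
  · -- the central quotient
    set φ : commutator G →* (G ⧸ K) := (QuotientGroup.mk' K).comp (commutator G).subtype with hφ
    have hφsurj : Function.Surjective φ := by
      rw [← MonoidHom.range_eq_top]
      rw [MonoidHom.range_comp, Subgroup.range_subtype, hmap]
    have hkerφ : φ.ker = Subgroup.center (commutator G) := by
      ext c
      constructor
      · intro hc
        have hcK : (c : G) ∈ K := by
          have := MonoidHom.mem_ker.mp hc
          rwa [hφ, MonoidHom.comp_apply, ← MonoidHom.mem_ker, QuotientGroup.ker_mk'] at this
        rw [Subgroup.mem_center_iff]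
        intro d
        exact Subtype.ext (hKcentral (c : G) hcK (d : G)).symm
      · intro hc
        rw [MonoidHom.mem_ker]
        -- φ c is central in G ⧸ K, whose center is trivial
        have hcentral : ∀ q : G ⧸ K, q * φ c = φ c * q := by
          intro q
          obtain ⟨d, rfl⟩ := hφsurj q
          rw [← map_mul, ← map_mul, Subgroup.mem_center_iff.mp hc d]
        have hQcenter : Subgroup.center (G ⧸ K) = ⊥ := by
          ext q
          rw [Subgroup.mem_center_iff, Subgroup.mem_bot]
          constructor
          · intro hq
            have : e q ∈ Subgroup.center (alternatingGroup (Fin 5)) := by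
              rw [Subgroup.mem_center_iff]
              intro a
              obtain ⟨b, rfl⟩ := e.surjective a
              rw [← map_mul, ← map_mul, hq b]
            rw [A5_center_eq_bot, Subgroup.mem_bot] at this
            have := congrArg e.symm this
            simpa using this
          · rintro rfl; simp
        have : φ c ∈ Subgroup.center (G ⧸ K) := Subgroup.mem_center_iff.mpr hcentral
        rwa [hQcenter, Subgroup.mem_bot] at this
    exact ⟨((QuotientGroup.quotientMulEquivOfEq hkerφ.symm).trans
      (QuotientGroup.quotientKerEquivOfSurjective φ hφsurj)).trans e⟩
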